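/- There exists a finite positive Borel measure μ on ℝ^∞ = ℕ → ℝ concentrated on (-1,1)^∞ such that the supremum over all d ≥ 1 and all s ∈ (-1,1)^∞ of the quantity ∏_{j=1}^d (1 - s_j²) · ∫ ∏_{j=1}^d (1 - t_j s_j)^{-2} dμ(t) is finite, and yet μ is not a Carleson measure for H²(𝕋^∞). -/

import Mathlib

open MeasureTheory Finset
open scoped BigOperators ENNReal

noncomputable section

/-- atom points -/
def nuPt (d : ℕ) (T : Finset ℕ) : ℕ → ℝ := fun j => if j < d then (if j ∈ T then 1/2 else -(1/2)) else 0

def qE : ℝ≥0∞ := ENNReal.ofReal (161/324)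

def wgt (p : ℕ × Finset ℕ) : ℝ≥0∞ := if p.2 ⊆ Finset.range p.1 then qE ^ p.1 else 0

def myMu : Measure (ℕ → ℝ) := Measure.sum fun p : ℕ × Finset ℕ => wgt p • Measure.dirac (nuPt p.1 p.2)

lemma nuPt_abs_le (d : ℕ) (T : Finset ℕ) (j : ℕ) : |nuPt d T j| ≤ 1/2 := by
  unfold nuPt
  split_ifs <;> norm_num [abs_le]

lemma myMu_lintegral (f : (ℕ → ℝ) → ℝ≥0∞) (hf : Measurable f) :
    ∫⁻ t, f t ∂myMu = ∑' d : ℕ, ∑' T : Finset ℕ, wgt (d, T) * f (nuPt d T) := by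
  rw [myMu, lintegral_sum_measure, ENNReal.tsum_prod']
  congr 1; ext d; congr 1; ext T
  rw [lintegral_smul_measure, lintegral_dirac' _ hf]
  rfl

lemma tsum_wgt_eq (d : ℕ) (g : Finset ℕ → ℝ≥0∞) :
    ∑' T : Finset ℕ, wgt (d, T) * g T
      = ∑ T ∈ (Finset.range d).powerset, qE ^ d * g T := by
  have h1 : ∑' T : Finset ℕ, wgt (d, T) * g T
      = ∑ T ∈ (Finset.range d).powerset, wgt (d, T) * g T := by
    refine tsum_eq_sum ?_
    intro T hT
    have : ¬ T ⊆ Finset.range d := by simpa using hT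
    simp [wgt, this]
  rw [h1]
  refine Finset.sum_congr rfl fun T hT => ?_
  have : T ⊆ Finset.range d := by simpa using hT
  simp [wgt, this]

end
noncomputable section
open MeasureTheory Finset

lemma qE_two : qE * 2 = ENNReal.ofReal (161/162) := by
  rw [qE, show (2:ℝ≥0∞) = ENNReal.ofReal 2 by simp, ← ENNReal.ofReal_mul (by norm_num)]
  norm_num

lemma tsum_r : ∑' d : ℕ, (ENNReal.ofReal (161/162)) ^ d = ENNReal.ofReal 162 := by
  rw [ENNReal.tsum_geometric]
  have h1 : (1:ℝ≥0∞) - ENNReal.ofReal (161/162) = ENNReal.ofReal (1/162) := by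
    rw [← ENNReal.ofReal_one, ← ENNReal.ofReal_sub _ (by norm_num)]
    norm_num
  rw [h1, show (1/162 : ℝ) = (162:ℝ)⁻¹ by norm_num,
    ENNReal.ofReal_inv_of_pos (by norm_num), inv_inv]

lemma myMu_univ : myMu Set.univ = ENNReal.ofReal 162 := by
  have h := myMu_lintegral (fun _ => 1) measurable_const
  rw [lintegral_one] at h
  rw [h]
  have h2 : ∀ d : ℕ, ∑' T : Finset ℕ, wgt (d, T) * 1 = (ENNReal.ofReal (161/162)) ^ d := by
    intro d
    rw [tsum_wgt_eq d (fun _ => 1)]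
    simp only [mul_one, Finset.sum_const, Finset.card_powerset, Finset.card_range]
    rw [nsmul_eq_mul, Nat.cast_pow, Nat.cast_ofNat, ← mul_pow, mul_comm, qE_two]
  simp only [h2, tsum_r]

instance : IsFiniteMeasure myMu := by
  constructor
  rw [myMu_univ]
  exact ENNReal.ofReal_lt_top

lemma cube_measurable : MeasurableSet {t : ℕ → ℝ | ∀ j, |t j| < 1} := by
  have : {t : ℕ → ℝ | ∀ j, |t j| < 1} = ⋂ j, (fun t : ℕ → ℝ => t j) ⁻¹' {x : ℝ | |x| < 1} := by
    ext t; simp [Set.mem_iInter]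
  rw [this]
  exact MeasurableSet.iInter fun j =>
    (measurable_pi_apply j) ((isOpen_lt continuous_abs continuous_const).measurableSet)

lemma myMu_cube : myMu {t : ℕ → ℝ | ¬ ∀ j, |t j| < 1} = 0 := by
  have hms : MeasurableSet {t : ℕ → ℝ | ¬ ∀ j, |t j| < 1} := by
    have : {t : ℕ → ℝ | ¬ ∀ j, |t j| < 1} = {t : ℕ → ℝ | ∀ j, |t j| < 1}ᶜ := rfl
    rw [this]; exact cube_measurable.compl
  rw [myMu, Measure.sum_apply _ hms]
  refine ENNReal.tsum_eq_zero.mpr fun p => ?_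
  rw [Measure.smul_apply, Measure.dirac_apply' _ hms]
  have : nuPt p.1 p.2 ∈ {t : ℕ → ℝ | ∀ j, |t j| < 1} := by
    intro j
    exact lt_of_le_of_lt (nuPt_abs_le p.1 p.2 j) (by norm_num)
  rw [Set.indicator_of_notMem (by simpa using this), smul_zero]

lemma core_ineq {x : ℝ} (hx : |x| < 1) :
    (1 - x^2) * ((1 - (1/2:ℝ)*x)⁻¹)^2 + (1 - x^2) * ((1 - (-(1/2):ℝ)*x)⁻¹)^2 ≤ 2 := by
  obtain ⟨h1, h2⟩ := abs_lt.mp hx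
  have ha : (0:ℝ) < 1 - (1/2)*x := by linarith
  have hb : (0:ℝ) < 1 - (-(1/2))*x := by linarith
  rw [inv_pow, inv_pow, ← div_eq_mul_inv, ← div_eq_mul_inv,
    div_add_div _ _ (ne_of_gt (pow_pos ha 2)) (ne_of_gt (pow_pos hb 2)),
    div_le_iff₀ (by positivity)]
  nlinarith [sq_nonneg x, sq_nonneg (x*x), sq_nonneg (x^2)]

end
noncomputable section
open MeasureTheory Finset

lemma sum_bound (d D : ℕ) (s : ℕ → ℝ) (hs : ∀ j, |s j| < 1) :
    ∑ T ∈ (Finset.range d).powerset,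
      (∏ j ∈ Finset.range D, (1 - s j ^ 2)) *
        (∏ j ∈ Finset.range D, (1 - nuPt d T j * s j)⁻¹) ^ 2 ≤ 2 ^ d := by
  have hs2 : ∀ j, 0 ≤ 1 - s j ^ 2 := fun j => by
    have := abs_lt.mp (hs j); nlinarith
  set c : Finset ℕ → ℕ → ℝ :=
    fun T j => (1 - s j ^ 2) * ((1 - nuPt d T j * s j)⁻¹) ^ 2 with hc
  have hc0 : ∀ T j, 0 ≤ c T j := fun T j => mul_nonneg (hs2 j) (sq_nonneg _)
  have hsummand : ∀ T, (∏ j ∈ Finset.range D, (1 - s j ^ 2)) *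
      (∏ j ∈ Finset.range D, (1 - nuPt d T j * s j)⁻¹) ^ 2
        = ∏ j ∈ Finset.range D, c T j := by
    intro T
    rw [← Finset.prod_pow, ← Finset.prod_mul_distrib]
  set A : ℕ → ℝ := fun j => if j < D then (1 - s j ^ 2) * ((1 - (1/2:ℝ) * s j)⁻¹) ^ 2 else 1 with hA
  set B : ℕ → ℝ := fun j => if j < D then (1 - s j ^ 2) * ((1 - (-(1/2):ℝ) * s j)⁻¹) ^ 2 else 1 with hB
  have step1 : ∀ T, ∏ j ∈ Finset.range D, c T j
      ≤ ∏ j ∈ Finset.range d, (if j < D then c T j else 1) := by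
    intro T
    rcases le_or_gt D d with h | h
    · rw [← Finset.prod_range_mul_prod_Ico (fun j => if j < D then c T j else 1) h]
      have e1 : ∏ j ∈ Finset.range D, (if j < D then c T j else 1)
          = ∏ j ∈ Finset.range D, c T j :=
        Finset.prod_congr rfl fun j hj => if_pos (Finset.mem_range.mp hj)
      have e2 : ∏ j ∈ Finset.Ico D d, (if j < D then c T j else 1) = 1 :=
        Finset.prod_eq_one fun j hj => if_neg (not_lt.mpr (Finset.mem_Ico.mp hj).1)
      rw [e1, e2, mul_one]
    · rw [← Finset.prod_range_mul_prod_Ico (c T) h.le]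
      have h2 : ∏ j ∈ Finset.Ico d D, c T j ≤ 1 := by
        refine Finset.prod_le_one (fun j _ => hc0 T j) (fun j hj => ?_)
        have hjd : ¬ j < d := not_lt.mpr (Finset.mem_Ico.mp hj).1
        have : c T j = 1 - s j ^ 2 := by simp [hc, nuPt, hjd]
        rw [this]
        nlinarith [sq_nonneg (s j)]
      calc (∏ j ∈ Finset.range d, c T j) * ∏ j ∈ Finset.Ico d D, c T j
          ≤ (∏ j ∈ Finset.range d, c T j) * 1 :=
            mul_le_mul_of_nonneg_left h2 (Finset.prod_nonneg fun j _ => hc0 T j)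
        _ = ∏ j ∈ Finset.range d, (if j < D then c T j else 1) := by
            rw [mul_one]
            exact (Finset.prod_congr rfl fun j hj =>
              (if_pos (lt_trans (Finset.mem_range.mp hj) h)).symm)
  have step2 : ∑ T ∈ (Finset.range d).powerset,
      ∏ j ∈ Finset.range d, (if j < D then c T j else 1)
        = ∏ j ∈ Finset.range d, (A j + B j) := by
    rw [Finset.prod_add]
    refine Finset.sum_congr rfl fun T hT => ?_
    have hTsub : T ⊆ Finset.range d := Finset.mem_powerset.mp hT
    have hsplit : ∏ j ∈ Finset.range d, (if j < D then c T j else 1)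
        = (∏ j ∈ T, (if j < D then c T j else 1)) *
          ∏ j ∈ Finset.range d \ T, (if j < D then c T j else 1) := by
      rw [← Finset.prod_union Finset.sdiff_disjoint.symm, Finset.union_sdiff_of_subset hTsub]
    rw [hsplit]
    congr 1
    · refine Finset.prod_congr rfl fun j hj => ?_
      have hjd : j < d := Finset.mem_range.mp (hTsub hj)
      have hpt : nuPt d T j = 1/2 := by simp [nuPt, hjd, hj]
      by_cases hjD : j < D <;> simp [hA, hjD, hc, hpt]
    · refine Finset.prod_congr rfl fun j hj => ?_
      obtain ⟨hjr, hjT⟩ := Finset.mem_sdiff.mp hj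
      have hjd : j < d := Finset.mem_range.mp hjr
      have hpt : nuPt d T j = -(1/2) := by simp [nuPt, hjd, hjT]
      by_cases hjD : j < D <;> simp [hB, hjD, hc, hpt]
  have step3 : ∏ j ∈ Finset.range d, (A j + B j) ≤ 2 ^ d := by
    have : ∀ j ∈ Finset.range d, A j + B j ≤ 2 := by
      intro j _
      by_cases hjD : j < D
      · simp only [hA, hB, if_pos hjD]
        exact core_ineq (hs j)
      · simp only [hA, hB, if_neg hjD]; norm_num
    calc ∏ j ∈ Finset.range d, (A j + B j) ≤ ∏ j ∈ Finset.range d, 2 := by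
          refine Finset.prod_le_prod (fun j _ => ?_) this
          refine add_nonneg ?_ ?_ <;>
            · simp only [hA, hB]
              split_ifs
              · exact mul_nonneg (hs2 j) (sq_nonneg _)
              · norm_num
      _ = 2 ^ d := by rw [Finset.prod_const, Finset.card_range]
  calc ∑ T ∈ (Finset.range d).powerset,
        (∏ j ∈ Finset.range D, (1 - s j ^ 2)) *
          (∏ j ∈ Finset.range D, (1 - nuPt d T j * s j)⁻¹) ^ 2
      ≤ ∑ T ∈ (Finset.range d).powerset,
          ∏ j ∈ Finset.range d, (if j < D then c T j else 1) := by
        refine Finset.sum_le_sum fun T _ => ?_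
        rw [hsummand T]; exact step1 T
    _ = ∏ j ∈ Finset.range d, (A j + B j) := step2
    _ ≤ 2 ^ d := step3

end
noncomputable section
open MeasureTheory Finset

lemma kernel_bound (D : ℕ) (s : ℕ → ℝ) (hs : ∀ j, |s j| < 1) :
    ENNReal.ofReal (∏ j ∈ Finset.range D, (1 - s j ^ 2)) *
        ∫⁻ t, ENNReal.ofReal ((∏ j ∈ Finset.range D, (1 - t j * s j)⁻¹) ^ 2) ∂myMu
      ≤ ENNReal.ofReal 162 := by
  have hs2 : ∀ j, 0 ≤ 1 - s j ^ 2 := fun j => by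
    have := abs_lt.mp (hs j); nlinarith
  have hP : 0 ≤ ∏ j ∈ Finset.range D, (1 - s j ^ 2) :=
    Finset.prod_nonneg fun j _ => hs2 j
  have hmeas : Measurable fun t : ℕ → ℝ =>
      ENNReal.ofReal ((∏ j ∈ Finset.range D, (1 - t j * s j)⁻¹) ^ 2) := by
    refine ENNReal.measurable_ofReal.comp ?_
    refine Measurable.pow_const ?_ 2
    exact Finset.measurable_prod _ fun j _ =>
      (measurable_const.sub ((measurable_pi_apply j).mul_const _)).inv
  rw [myMu_lintegral _ hmeas, ← ENNReal.tsum_mul_left]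
  calc ∑' d : ℕ, ENNReal.ofReal (∏ j ∈ Finset.range D, (1 - s j ^ 2)) *
        ∑' T : Finset ℕ, wgt (d, T) *
          ENNReal.ofReal ((∏ j ∈ Finset.range D, (1 - nuPt d T j * s j)⁻¹) ^ 2)
      ≤ ∑' d : ℕ, (ENNReal.ofReal (161/162)) ^ d := by
        refine ENNReal.tsum_le_tsum fun d => ?_
        rw [tsum_wgt_eq, Finset.mul_sum]
        have e1 : ∀ T ∈ (Finset.range d).powerset,
            ENNReal.ofReal (∏ j ∈ Finset.range D, (1 - s j ^ 2)) *
              (qE ^ d * ENNReal.ofReal ((∏ j ∈ Finset.range D, (1 - nuPt d T j * s j)⁻¹) ^ 2))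
            = qE ^ d * ENNReal.ofReal ((∏ j ∈ Finset.range D, (1 - s j ^ 2)) *
                (∏ j ∈ Finset.range D, (1 - nuPt d T j * s j)⁻¹) ^ 2) := by
          intro T _
          rw [ENNReal.ofReal_mul hP, mul_left_comm]
        rw [Finset.sum_congr rfl e1, ← Finset.mul_sum,
          ← ENNReal.ofReal_sum_of_nonneg (fun T _ => mul_nonneg hP (sq_nonneg _))]
        calc qE ^ d * ENNReal.ofReal (∑ T ∈ (Finset.range d).powerset,
              (∏ j ∈ Finset.range D, (1 - s j ^ 2)) *
                (∏ j ∈ Finset.range D, (1 - nuPt d T j * s j)⁻¹) ^ 2)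
            ≤ qE ^ d * ENNReal.ofReal (2 ^ d) :=
              mul_le_mul_right (ENNReal.ofReal_le_ofReal (sum_bound d D s hs)) _
          _ = (ENNReal.ofReal (161/162)) ^ d := by
              rw [show ((2:ℝ) ^ d) = ((2:ℝ≥0∞) ^ d).toReal by simp,
                ENNReal.ofReal_toReal (by simp), ← mul_pow, qE_two]
    _ = ENNReal.ofReal 162 := tsum_r

end
noncomputable section
open MeasureTheory Finset MvPolynomial

def fD (D : ℕ) : MvPolynomial ℕ ℂ :=
  ∏ j ∈ Finset.range D, (MvPolynomial.C 2 + MvPolynomial.X j ^ 2)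

lemma coeff_smallQ_zero (p : MvPolynomial ℕ ℂ) (n : ℕ) (κ : ℕ →₀ ℕ) (hκ : κ n = 0) :
    coeff κ (p * X n ^ 2) = 0 := by
  rw [show (X n ^ 2 : MvPolynomial ℕ ℂ) = X n * X n by ring, ← mul_assoc, coeff_mul_X']
  rw [if_neg]
  simpa [Finsupp.mem_support_iff] using hκ

lemma coeff_Q_of_zero (p : MvPolynomial ℕ ℂ) (n : ℕ) (κ : ℕ →₀ ℕ) (hκ : κ n = 0) :
    coeff κ (p * (C 2 + X n ^ 2)) = 2 * coeff κ p := by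
  rw [mul_add, coeff_add, coeff_smallQ_zero p n κ hκ, add_zero, mul_comm p (C 2), coeff_C_mul]

lemma coeff_Q_of_shift (p : MvPolynomial ℕ ℂ) (n : ℕ)
    (h : ∀ κ ∈ p.support, κ n = 0) (l : ℕ →₀ ℕ) :
    coeff (l + Finsupp.single n 2) (p * (C 2 + X n ^ 2)) = coeff l p := by
  have h2 : coeff (l + Finsupp.single n 2) p = 0 := by
    by_contra hne
    have := h _ (mem_support_iff.mpr hne)
    simp [Finsupp.single_apply] at this
  rw [mul_add, coeff_add, mul_comm p (C 2), coeff_C_mul, h2, mul_zero, zero_add]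
  rw [show (X n ^ 2 : MvPolynomial ℕ ℂ) = X n * X n by ring, ← mul_assoc]
  rw [show Finsupp.single n 2 = Finsupp.single n 1 + Finsupp.single n 1 by
    rw [← Finsupp.single_add]]
  rw [← add_assoc, coeff_mul_X, coeff_mul_X]

lemma support_Q_subset (p : MvPolynomial ℕ ℂ) (n : ℕ)
    (h : ∀ κ ∈ p.support, κ n = 0) :
    (p * (C 2 + X n ^ 2)).support ⊆
      p.support ∪ p.support.image (· + Finsupp.single n 2) := by
  intro κ hκ
  have hne : coeff κ (p * (C 2 + X n ^ 2)) ≠ 0 := mem_support_iff.mp hκ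
  by_cases hn : κ n = 0
  · rw [coeff_Q_of_zero p n κ hn] at hne
    have : coeff κ p ≠ 0 := by
      intro h0; rw [h0, mul_zero] at hne; exact hne rfl
    exact Finset.mem_union_left _ (mem_support_iff.mpr this)
  · have hpC : coeff κ (p * C 2) = 0 := by
      rw [mul_comm p (C 2), coeff_C_mul]
      have : coeff κ p = 0 := by
        by_contra hne2
        exact hn (h _ (mem_support_iff.mpr hne2))
      rw [this, mul_zero]
    have hX : coeff κ (p * X n ^ 2) ≠ 0 := by
      intro h0
      rw [mul_add, coeff_add, hpC, zero_add] at hne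
      exact hne h0
    rw [show (X n ^ 2 : MvPolynomial ℕ ℂ) = X n * X n by ring, ← mul_assoc,
      coeff_mul_X'] at hX
    by_cases hmem : n ∈ κ.support
    · rw [if_pos hmem, coeff_mul_X'] at hX
      by_cases hmem2 : n ∈ (κ - Finsupp.single n 1).support
      · rw [if_pos hmem2] at hX
        set l := κ - Finsupp.single n 1 - Finsupp.single n 1 with hl
        have hlsupp : l ∈ p.support := mem_support_iff.mpr hX
        have hln : l n = 0 := h _ hlsupp
        have e1 : κ n ≠ 0 := by simpa [Finsupp.mem_support_iff] using hmem
        have e2 : κ n - 1 ≠ 0 := by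
          have := Finsupp.mem_support_iff.mp hmem2
          simpa [Finsupp.tsub_apply, Finsupp.single_eq_same] using this
        have e3 : κ n - 1 - 1 = 0 := by
          have := hln
          rw [hl] at this
          simpa [Finsupp.tsub_apply, Finsupp.single_eq_same] using this
        have hκn2 : κ n = 2 := by omega
        have : κ = l + Finsupp.single n 2 := by
          ext j
          by_cases hj : j = n
          · subst hj
            simp only [Finsupp.add_apply, hl, Finsupp.tsub_apply, Finsupp.single_eq_same]
            omega
          · have hnj : n ≠ j := fun hc => hj hc.symm
            simp only [Finsupp.add_apply, hl, Finsupp.tsub_apply, Finsupp.single_apply,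
              if_neg hnj]
            omega
        refine Finset.mem_union_right _ (Finset.mem_image.mpr ⟨l, hlsupp, this.symm⟩)
      · rw [if_neg hmem2] at hX; exact absurd rfl hX
    · rw [if_neg hmem] at hX; exact absurd rfl hX

lemma sum_Q (p : MvPolynomial ℕ ℂ) (n : ℕ)
    (h : ∀ κ ∈ p.support, κ n = 0) :
    ∑ κ ∈ (p * (C 2 + X n ^ 2)).support,
        ‖coeff κ (p * (C 2 + X n ^ 2))‖ ^ 2
      = 5 * ∑ κ ∈ p.support, ‖coeff κ p‖ ^ 2 := by
  set Q := p * (C 2 + X n ^ 2) with hQ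
  have hdisj : Disjoint p.support (p.support.image (· + Finsupp.single n 2)) := by
    rw [Finset.disjoint_left]
    intro κ hκ himg
    obtain ⟨l, _, hl⟩ := Finset.mem_image.mp himg
    have h1 : κ n = 0 := h _ hκ
    rw [← hl] at h1
    simp [Finsupp.add_apply, Finsupp.single_eq_same] at h1
  have hsum : ∑ κ ∈ Q.support, ‖coeff κ Q‖ ^ 2
      = ∑ κ ∈ p.support ∪ p.support.image (· + Finsupp.single n 2),
          ‖coeff κ Q‖ ^ 2 := by
    refine Finset.sum_subset (support_Q_subset p n h) fun κ _ hκ => ?_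
    rw [notMem_support_iff.mp hκ]
    simp
  rw [hsum, Finset.sum_union hdisj]
  have e1 : ∑ κ ∈ p.support, ‖coeff κ Q‖ ^ 2
      = ∑ κ ∈ p.support, 4 * ‖coeff κ p‖ ^ 2 := by
    refine Finset.sum_congr rfl fun κ hκ => ?_
    rw [hQ, coeff_Q_of_zero p n κ (h _ hκ), norm_mul, Complex.norm_two]
    ring
  have e2 : ∑ κ ∈ p.support.image (· + Finsupp.single n 2), ‖coeff κ Q‖ ^ 2
      = ∑ κ ∈ p.support, ‖coeff κ p‖ ^ 2 := by
    rw [Finset.sum_image (fun a _ b _ hab => by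
      exact add_right_cancel hab)]
    refine Finset.sum_congr rfl fun κ _ => ?_
    rw [hQ, coeff_Q_of_shift p n h κ]
  rw [e1, e2, ← Finset.mul_sum]
  ring

lemma fD_props (D : ℕ) :
    (∀ κ ∈ (fD D).support, ∀ j, D ≤ j → κ j = 0) ∧
    ∑ κ ∈ (fD D).support, ‖coeff κ (fD D)‖ ^ 2 = 5 ^ D := by
  induction D with
  | zero =>
    have h1 : fD 0 = 1 := by simp [fD]
    have hsupp1 : (fD 0).support = {(0 : ℕ →₀ ℕ)} := by
      rw [h1, show (1 : MvPolynomial ℕ ℂ) = MvPolynomial.C 1 from (MvPolynomial.C_1).symm,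
        MvPolynomial.C_apply, MvPolynomial.support_monomial, if_neg one_ne_zero]
    constructor
    · intro κ hκ j _
      rw [hsupp1] at hκ
      simp only [Finset.mem_singleton] at hκ
      simp [hκ]
    · rw [hsupp1, h1]
      simp
  | succ D ih =>
    have hstep : fD (D + 1) = fD D * (C 2 + X D ^ 2) := by
      rw [fD, Finset.prod_range_succ]; rfl
    have hD0 : ∀ κ ∈ (fD D).support, κ D = 0 := fun κ hκ => ih.1 κ hκ D le_rfl
    constructor
    · intro κ hκ j hj
      rw [hstep] at hκ
      rcases Finset.mem_union.mp (support_Q_subset (fD D) D hD0 hκ) with h1 | h1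
      · exact ih.1 κ h1 j (le_trans (Nat.le_succ D) hj)
      · obtain ⟨l, hl, rfl⟩ := Finset.mem_image.mp h1
        rw [Finsupp.add_apply, ih.1 l hl j (le_trans (Nat.le_succ D) hj),
          Finsupp.single_eq_of_ne (by omega), add_zero]
    · rw [hstep, sum_Q (fD D) D hD0, ih.2]
      ring

end
noncomputable section
open MeasureTheory Finset MvPolynomial

lemma wgt_total : ∑' d : ℕ, ∑' T : Finset ℕ, wgt (d, T) = ENNReal.ofReal 162 := by
  have h2 : ∀ d : ℕ, ∑' T : Finset ℕ, wgt (d, T) = (ENNReal.ofReal (161/162)) ^ d := by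
    intro d
    have := tsum_wgt_eq d (fun _ => 1)
    simp only [mul_one] at this
    rw [this]
    simp only [Finset.sum_const, Finset.card_powerset, Finset.card_range]
    rw [nsmul_eq_mul, Nat.cast_pow, Nat.cast_ofNat, ← mul_pow, mul_comm, qE_two]
  simp only [h2, tsum_r]

lemma fD_eval (D : ℕ) (t : ℕ → ℝ) :
    ‖MvPolynomial.eval (fun j => (t j : ℂ)) (fD D)‖
      = ∏ j ∈ Finset.range D, (2 + t j ^ 2) := by
  rw [fD, map_prod, norm_prod]
  refine Finset.prod_congr rfl fun j _ => ?_
  have h1 : MvPolynomial.eval (fun j => (t j : ℂ)) (MvPolynomial.C 2 + MvPolynomial.X j ^ 2)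
      = ((2 + t j ^ 2 : ℝ) : ℂ) := by
    simp only [map_add, eval_C, map_pow, eval_X]
    push_cast
    ring
  rw [h1, Complex.norm_real, Real.norm_of_nonneg (by positivity)]

lemma integral_lower (D : ℕ) :
    ((13041:ℝ)/12960) ^ D * 5 ^ D ≤
      ∫ t, ‖MvPolynomial.eval (fun j => (t j : ℂ)) (fD D)‖ ^ 2 ∂myMu := by
  set G : (ℕ → ℝ) → ℝ := fun t => (∏ j ∈ Finset.range D, (2 + t j ^ 2)) ^ 2 with hG
  have hFG : (fun t : ℕ → ℝ => ‖MvPolynomial.eval (fun j => (t j : ℂ)) (fD D)‖ ^ 2)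
      = G := funext fun t => by rw [fD_eval]
  have hGm : Measurable G :=
    (Finset.measurable_prod _ fun j _ =>
      measurable_const.add ((measurable_pi_apply j).pow_const 2)).pow_const 2
  have hG0 : ∀ t, 0 ≤ G t := fun t => sq_nonneg _
  rw [hFG, integral_eq_lintegral_of_nonneg_ae (Filter.Eventually.of_forall hG0)
    hGm.aestronglyMeasurable]
  set I := ∫⁻ t, ENNReal.ofReal (G t) ∂myMu with hI
  have hrepr : I = ∑' d : ℕ, ∑' T : Finset ℕ, wgt (d, T) * ENNReal.ofReal (G (nuPt d T)) :=
    myMu_lintegral _ (ENNReal.measurable_ofReal.comp hGm)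
  have h8116 : ((9/4:ℝ) ^ D) ^ 2 = (81/16) ^ D := by
    rw [show (81/16:ℝ) = (9/4)^2 by norm_num, ← pow_mul, ← pow_mul, mul_comm]
  have hGb : ∀ d T, G (nuPt d T) ≤ (81/16 : ℝ) ^ D := by
    intro d T
    have h1 : ∏ j ∈ Finset.range D, (2 + nuPt d T j ^ 2) ≤ (9/4 : ℝ) ^ D := by
      calc ∏ j ∈ Finset.range D, (2 + nuPt d T j ^ 2)
          ≤ ∏ j ∈ Finset.range D, (9/4 : ℝ) := by
            refine Finset.prod_le_prod (fun j _ => by positivity) (fun j _ => ?_)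
            have := nuPt_abs_le d T j
            have h2 : nuPt d T j ^ 2 ≤ 1/4 := by
              have := abs_le.mp this
              nlinarith
            linarith
        _ = (9/4 : ℝ) ^ D := by rw [Finset.prod_const, Finset.card_range]
    have h0 : 0 ≤ ∏ j ∈ Finset.range D, (2 + nuPt d T j ^ 2) :=
      Finset.prod_nonneg fun j _ => by positivity
    calc G (nuPt d T) ≤ ((9/4 : ℝ) ^ D) ^ 2 := by
          rw [hG]; exact pow_le_pow_left₀ h0 h1 2
      _ = (81/16) ^ D := h8116
  have hIub : I ≤ ENNReal.ofReal ((81/16 : ℝ) ^ D) * ENNReal.ofReal 162 := by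
    rw [hrepr]
    calc ∑' d : ℕ, ∑' T : Finset ℕ, wgt (d, T) * ENNReal.ofReal (G (nuPt d T))
        ≤ ∑' d : ℕ, ∑' T : Finset ℕ, wgt (d, T) * ENNReal.ofReal ((81/16 : ℝ) ^ D) := by
          refine ENNReal.tsum_le_tsum fun d => ENNReal.tsum_le_tsum fun T =>
            mul_le_mul_right (ENNReal.ofReal_le_ofReal (hGb d T)) _
      _ = ENNReal.ofReal ((81/16 : ℝ) ^ D) * ENNReal.ofReal 162 := by
          rw [← wgt_total, mul_comm, ← ENNReal.tsum_mul_right]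
          congr 1
          ext d
          rw [← ENNReal.tsum_mul_right]
  have hItop : I ≠ ⊤ :=
    ne_top_of_le_ne_top (ENNReal.mul_ne_top ENNReal.ofReal_ne_top ENNReal.ofReal_ne_top) hIub
  have hlow : ENNReal.ofReal (((13041:ℝ)/12960) ^ D * 5 ^ D) ≤ I := by
    rw [hrepr]
    have hDterm : ∑' T : Finset ℕ, wgt (D, T) * ENNReal.ofReal (G (nuPt D T))
        = (2:ℝ≥0∞) ^ D * (qE ^ D * ENNReal.ofReal ((81/16 : ℝ) ^ D)) := by
      rw [tsum_wgt_eq]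
      have hval : ∀ T ∈ (Finset.range D).powerset,
          qE ^ D * ENNReal.ofReal (G (nuPt D T))
            = qE ^ D * ENNReal.ofReal ((81/16 : ℝ) ^ D) := by
        intro T _
        congr 2
        have : ∀ j ∈ Finset.range D, (2 + nuPt D T j ^ 2) = (9/4 : ℝ) := by
          intro j hj
          have hjD : j < D := Finset.mem_range.mp hj
          unfold nuPt
          rw [if_pos hjD]
          split_ifs <;> norm_num
        rw [hG]
        simp only
        rw [Finset.prod_congr rfl this, Finset.prod_const, Finset.card_range, h8116]
      rw [Finset.sum_congr rfl hval, Finset.sum_const, Finset.card_powerset, Finset.card_range,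
        nsmul_eq_mul, Nat.cast_pow, Nat.cast_ofNat]
    calc ENNReal.ofReal (((13041:ℝ)/12960) ^ D * 5 ^ D)
        = (2:ℝ≥0∞) ^ D * (qE ^ D * ENNReal.ofReal ((81/16 : ℝ) ^ D)) := by
          have e1 : (2:ℝ≥0∞) ^ D * (qE ^ D * ENNReal.ofReal ((81/16 : ℝ) ^ D))
              = (ENNReal.ofReal (161/162)) ^ D * ENNReal.ofReal ((81/16 : ℝ) ^ D) := by
            rw [← mul_assoc, ← mul_pow, mul_comm (2:ℝ≥0∞) qE, qE_two]
          rw [e1, ← ENNReal.ofReal_pow (by norm_num), ← ENNReal.ofReal_mul (by positivity),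
            ← mul_pow, ← mul_pow]
          congr 1
          norm_num
      _ = ∑' T : Finset ℕ, wgt (D, T) * ENNReal.ofReal (G (nuPt D T)) := hDterm.symm
      _ ≤ ∑' d : ℕ, ∑' T : Finset ℕ, wgt (d, T) * ENNReal.ofReal (G (nuPt d T)) :=
          ENNReal.le_tsum D
  have := ENNReal.toReal_mono hItop hlow
  rwa [ENNReal.toReal_ofReal (by positivity)] at this

end
/-- The `H²(𝕋^∞)` norm of a polynomial: `‖f‖ = (∑_κ |f_κ|²)^{1/2}`. -/
noncomputable def h2Norm (f : MvPolynomial ℕ ℂ) : ℝ :=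
  Real.sqrt (∑ κ ∈ f.support, ‖MvPolynomial.coeff κ f‖ ^ 2)

theorem stmt19 :
    ∃ μ : Measure (ℕ → ℝ), IsFiniteMeasure μ ∧
      μ {t | ¬ ∀ j, |t j| < 1} = 0 ∧
      (∃ B : ℝ, ∀ d : ℕ, 1 ≤ d → ∀ s : ℕ → ℝ, (∀ j, |s j| < 1) →
        ENNReal.ofReal (∏ j ∈ Finset.range d, (1 - s j ^ 2)) *
            ∫⁻ t, ENNReal.ofReal
              ((∏ j ∈ Finset.range d, (1 - t j * s j)⁻¹) ^ 2) ∂μ ≤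
          ENNReal.ofReal B) ∧
      ¬ (∃ C > 0, ∀ f : MvPolynomial ℕ ℂ,
        ∫ t, ‖MvPolynomial.eval (fun j => (t j : ℂ)) f‖ ^ 2 ∂μ ≤
          C * h2Norm f ^ 2) := by

  refine ⟨myMu, inferInstance, myMu_cube, ⟨162, fun d _ s hs => kernel_bound d s hs⟩, ?_⟩
  rintro ⟨c, hc, hcar⟩
  obtain ⟨D, hD⟩ := pow_unbounded_of_one_lt c (show (1:ℝ) < 13041/12960 by norm_num)
  have h1 := hcar (fD D)
  have h2 : h2Norm (fD D) ^ 2 = 5 ^ D := by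
    rw [h2Norm, Real.sq_sqrt (Finset.sum_nonneg fun κ _ => sq_nonneg _)]
    exact (fD_props D).2
  rw [h2] at h1
  have h3 := integral_lower D
  have h5 : (0:ℝ) < 5 ^ D := by positivity
  nlinarith [mul_lt_mul_of_pos_right hD h5]
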